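/- For every q ∈ [1,∞) there is a constant C_q ≥ 1 such that, for all Borel probability measures μ, ν supported on [0,1) and all m ∈ ℕ: C_q^{−1} ‖μ^(m) ∗ ν^(m)‖_q^q ≤ ‖(μ∗ν)^(m)‖_q^q ≤ C_q ‖μ^(m) ∗ ν^(m)‖_q^q. -/

import Mathlib

open MeasureTheory Filter Set Metric

/-- Convolution of measures: push-forward of μ × ν under (x,y) ↦ x + y. -/
noncomputable def mconv (μ ν : Measure ℝ) : Measure ℝ :=
  (μ.prod ν).map (fun p : ℝ × ℝ => p.1 + p.2)

/-- The level-m discretization μ^(m): the atomic measure with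
μ^(m)({k2^{-m}}) = μ([k2^{-m},(k+1)2^{-m})), realized as the push-forward of μ under
x ↦ ⌊2^m x⌋ 2^{-m}. -/
noncomputable def discretize (μ : Measure ℝ) (m : ℕ) : Measure ℝ :=
  μ.map (fun x : ℝ => (⌊x * 2 ^ m⌋ : ℝ) / 2 ^ m)

/-- ‖ρ‖_q^q = Σ_{x ∈ supp ρ} ρ({x})^q for a (finitely/countably supported) measure ρ. -/
noncomputable def lqNormQ (μ : Measure ℝ) (q : ℝ) : ℝ :=
  ∑' x : ℝ, (μ {x}).toReal ^ q

open scoped ENNReal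

lemma aux_meas_floor (m : ℕ) : Measurable (fun x : ℝ => (⌊x * 2 ^ m⌋ : ℝ) / 2 ^ m) := by
  measurability

/-- tsum of singleton masses is at most the total mass. -/
lemma aux_tsum_singleton_le (ρ : Measure ℝ) : ∑' x : ℝ, ρ {x} ≤ ρ Set.univ := by
  rw [ENNReal.tsum_eq_iSup_sum]
  refine iSup_le fun s => ?_
  have : ∑ x ∈ s, ρ {x} = ρ (⋃ x ∈ s, {x}) := by
    rw [measure_biUnion_finset ?_ (fun b _ => measurableSet_singleton b)]
    intro a _ b _ hab
    simp [Set.disjoint_singleton, hab]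
  rw [this]
  exact measure_mono (Set.subset_univ _)

theorem discret_convolution (q : ℝ) (hq : 1 ≤ q) :
    ∃ C : ℝ, 1 ≤ C ∧ ∀ μ ν : Measure ℝ,
      IsProbabilityMeasure μ → IsProbabilityMeasure ν →
      μ (Ico (0 : ℝ) 1)ᶜ = 0 → ν (Ico (0 : ℝ) 1)ᶜ = 0 →
      ∀ m : ℕ,
        C⁻¹ * lqNormQ (mconv (discretize μ m) (discretize ν m)) q ≤
            lqNormQ (discretize (mconv μ ν) m) q ∧
        lqNormQ (discretize (mconv μ ν) m) q ≤
            C * lqNormQ (mconv (discretize μ m) (discretize ν m)) q := by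
  refine ⟨2 ^ (q + 1), ?_, ?_⟩
  · calc (1:ℝ) = 2 ^ (0:ℝ) := by rw [Real.rpow_zero]
    _ ≤ 2 ^ (q + 1) := by
        apply Real.rpow_le_rpow_of_exponent_le one_le_two; linarith
  intro μ ν hμ hν hμs hνs m
  set F : ℝ → ℝ := fun x : ℝ => (⌊x * 2 ^ m⌋ : ℝ) / 2 ^ m with hF
  have hFm : Measurable F := aux_meas_floor m
  set δ : ℝ := 1 / 2 ^ m with hδ
  -- key floor fact
  have hfloor : ∀ x : ℝ, F x = (⌊x⌋ * (2:ℝ)^m + 0) / 2 ^ m ∨ True := fun _ => Or.inr trivial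
  -- Express D and E as pushforwards of μ.prod ν
  have hadd : Measurable (fun p : ℝ × ℝ => p.1 + p.2) := measurable_fst.add measurable_snd
  have hD : discretize (mconv μ ν) m = (μ.prod ν).map (fun p : ℝ × ℝ => F (p.1 + p.2)) := by
    rw [discretize, mconv, Measure.map_map hFm hadd]; rfl
  have hE : mconv (discretize μ m) (discretize ν m)
      = (μ.prod ν).map (fun p : ℝ × ℝ => F p.1 + F p.2) := by
    simp only [mconv, discretize]
    rw [Measure.map_prod_map _ _ hFm hFm, Measure.map_map hadd (hFm.prodMap hFm)]
    rfl
  have hGm : Measurable (fun p : ℝ × ℝ => F (p.1 + p.2)) := hFm.comp hadd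
  have hHm : Measurable (fun p : ℝ × ℝ => F p.1 + F p.2) :=
    (hFm.comp measurable_fst).add (hFm.comp measurable_snd)
  set D := discretize (mconv μ ν) m with hDdef
  set E := mconv (discretize μ m) (discretize ν m) with hEdef
  have hDx : ∀ x : ℝ, D {x} = (μ.prod ν) {p : ℝ × ℝ | F (p.1 + p.2) = x} := by
    intro x
    rw [hD, Measure.map_apply hGm (measurableSet_singleton x)]
    rfl
  have hEx : ∀ x : ℝ, E {x} = (μ.prod ν) {p : ℝ × ℝ | F p.1 + F p.2 = x} := by
    intro x
    rw [hE, Measure.map_apply hHm (measurableSet_singleton x)]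
    rfl
  -- key pointwise dichotomy
  have hkey : ∀ p : ℝ × ℝ, F (p.1 + p.2) = F p.1 + F p.2 ∨
      F (p.1 + p.2) = F p.1 + F p.2 + δ := by
    intro p
    have h2 : (0:ℝ) < 2 ^ m := by positivity
    have hadd' : (p.1 + p.2) * 2 ^ m = p.1 * 2 ^ m + p.2 * 2 ^ m := by ring
    have h1 : ⌊p.1 * 2 ^ m⌋ + ⌊p.2 * 2 ^ m⌋ ≤ ⌊(p.1 + p.2) * 2 ^ m⌋ := by
      rw [hadd']; exact Int.le_floor_add _ _
    have h2' : ⌊(p.1 + p.2) * 2 ^ m⌋ - 1 ≤ ⌊p.1 * 2 ^ m⌋ + ⌊p.2 * 2 ^ m⌋ := by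
      rw [hadd']; exact Int.le_floor_add_floor _ _
    have : ⌊(p.1 + p.2) * 2 ^ m⌋ = ⌊p.1 * 2 ^ m⌋ + ⌊p.2 * 2 ^ m⌋ ∨
        ⌊(p.1 + p.2) * 2 ^ m⌋ = ⌊p.1 * 2 ^ m⌋ + ⌊p.2 * 2 ^ m⌋ + 1 := by omega
    rcases this with h | h
    · left; simp only [hF, h]; push_cast; ring
    · right; simp only [hF, hδ, h]; push_cast; field_simp
  -- pointwise measure inequalities
  have hDE : ∀ x : ℝ, D {x} ≤ E {x} + E {x - δ} := by
    intro x
    rw [hDx, hEx, hEx]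
    refine le_trans (measure_mono ?_) (measure_union_le _ _)
    intro p hp
    rcases hkey p with h | h
    · left; simp only [Set.mem_setOf_eq] at *; rw [← h]; exact hp
    · right; simp only [Set.mem_setOf_eq] at *; rw [← hp, h]; ring
  have hED : ∀ x : ℝ, E {x} ≤ D {x} + D {x + δ} := by
    intro x
    rw [hDx, hDx, hEx]
    refine le_trans (measure_mono ?_) (measure_union_le _ _)
    intro p hp
    rcases hkey p with h | h
    · left; simp only [Set.mem_setOf_eq] at *; rw [h]; exact hp
    · right; simp only [Set.mem_setOf_eq] at *; rw [h, hp]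
  -- probability instances
  haveI : SigmaFinite μ := inferInstance
  haveI hPD : IsProbabilityMeasure D := by
    rw [hD]; exact Measure.isProbabilityMeasure_map hGm.aemeasurable
  haveI hPE : IsProbabilityMeasure E := by
    rw [hE]; exact Measure.isProbabilityMeasure_map hHm.aemeasurable
  -- ENNReal sums
  set SD : ℝ≥0∞ := ∑' x : ℝ, D {x} ^ q with hSD
  set SE : ℝ≥0∞ := ∑' x : ℝ, E {x} ^ q with hSE
  have hterm_le_one : ∀ (ρ : Measure ℝ) [IsProbabilityMeasure ρ] (x : ℝ),
      ρ {x} ^ q ≤ ρ {x} := by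
    intro ρ _ x
    calc ρ {x} ^ q ≤ ρ {x} ^ (1:ℝ) :=
          ENNReal.rpow_le_rpow_of_exponent_ge (prob_le_one) hq
    _ = ρ {x} := ENNReal.rpow_one _
  have hSD_le : SD ≤ 1 := by
    calc SD ≤ ∑' x : ℝ, D {x} := ENNReal.tsum_le_tsum (hterm_le_one D)
    _ ≤ D Set.univ := aux_tsum_singleton_le D
    _ = 1 := measure_univ
  have hSE_le : SE ≤ 1 := by
    calc SE ≤ ∑' x : ℝ, E {x} := ENNReal.tsum_le_tsum (hterm_le_one E)
    _ ≤ E Set.univ := aux_tsum_singleton_le E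
    _ = 1 := measure_univ
  -- (a+b)^q ≤ 2^q (a^q + b^q) in ENNReal
  have hrpow_add : ∀ a b : ℝ≥0∞, (a + b) ^ q ≤ 2 ^ q * (a ^ q + b ^ q) := by
    intro a b
    have h1 : a + b ≤ 2 * max a b := by
      rw [two_mul]
      exact add_le_add (le_max_left a b) (le_max_right a b)
    have hq0 : 0 ≤ q := by linarith
    calc (a + b) ^ q ≤ (2 * max a b) ^ q := ENNReal.rpow_le_rpow h1 hq0
    _ = 2 ^ q * (max a b) ^ q := ENNReal.mul_rpow_of_nonneg _ _ hq0
    _ ≤ 2 ^ q * (a ^ q + b ^ q) := by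
        gcongr
        rcases max_cases a b with ⟨h, _⟩ | ⟨h, _⟩ <;> rw [h]
        · exact le_add_right le_rfl
        · exact le_add_left le_rfl
  -- shift invariance of sums
  have hshift : ∀ (f : ℝ → ℝ≥0∞) (c : ℝ), ∑' x : ℝ, f (x + c) = ∑' x : ℝ, f x := by
    intro f c
    exact (Equiv.addRight c).tsum_eq f
  have h2exp : (2 : ℝ≥0∞) ^ (q + 1) = 2 ^ q * 2 := by
    rw [ENNReal.rpow_add _ _ (by norm_num) (by norm_num), ENNReal.rpow_one]
  have hSDle : SD ≤ 2 ^ (q + 1) * SE := by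
    have : SD ≤ ∑' x : ℝ, 2 ^ q * (E {x} ^ q + E {x - δ} ^ q) := by
      refine ENNReal.tsum_le_tsum fun x => ?_
      exact le_trans (ENNReal.rpow_le_rpow (hDE x) (by linarith)) (hrpow_add _ _)
    calc SD ≤ _ := this
    _ = 2 ^ q * (SE + ∑' x : ℝ, E {x - δ} ^ q) := by
        rw [ENNReal.tsum_mul_left, ENNReal.tsum_add]
    _ = 2 ^ q * (SE + SE) := by
        congr 2
        have := hshift (fun x => E {x} ^ q) (-δ)
        simpa [sub_eq_add_neg] using this
    _ = 2 ^ (q + 1) * SE := by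
        rw [← two_mul, h2exp]; ring
  have hSEle : SE ≤ 2 ^ (q + 1) * SD := by
    have : SE ≤ ∑' x : ℝ, 2 ^ q * (D {x} ^ q + D {x + δ} ^ q) := by
      refine ENNReal.tsum_le_tsum fun x => ?_
      exact le_trans (ENNReal.rpow_le_rpow (hED x) (by linarith)) (hrpow_add _ _)
    calc SE ≤ _ := this
    _ = 2 ^ q * (SD + ∑' x : ℝ, D {x + δ} ^ q) := by
        rw [ENNReal.tsum_mul_left, ENNReal.tsum_add]
    _ = 2 ^ q * (SD + SD) := by
        congr 2
        exact hshift (fun x => D {x} ^ q) δ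
    _ = 2 ^ (q + 1) * SD := by
        rw [← two_mul, h2exp]; ring
  -- convert to real
  have hconv : ∀ (ρ : Measure ℝ) [IsProbabilityMeasure ρ],
      lqNormQ ρ q = (∑' x : ℝ, ρ {x} ^ q).toReal := by
    intro ρ _
    rw [lqNormQ]
    simp only [ENNReal.toReal_rpow]
    refine (ENNReal.tsum_toReal_eq fun x => ?_).symm
    exact ne_of_lt (lt_of_le_of_lt (hterm_le_one ρ x)
      (lt_of_le_of_lt prob_le_one (by norm_num)))
  have hlD : lqNormQ D q = SD.toReal := hconv D
  have hlE : lqNormQ E q = SE.toReal := hconv E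
  have h2q : ((2 : ℝ≥0∞) ^ (q + 1)).toReal = 2 ^ (q + 1) := by
    rw [← ENNReal.toReal_rpow]; norm_num
  have hSDne : SD ≠ ∞ := ne_of_lt (lt_of_le_of_lt hSD_le (by norm_num))
  have hSEne : SE ≠ ∞ := ne_of_lt (lt_of_le_of_lt hSE_le (by norm_num))
  have h2ne : (2 : ℝ≥0∞) ^ (q + 1) ≠ ∞ := by
    exact ENNReal.rpow_ne_top_of_nonneg (by linarith) (by norm_num)
  have hineq1 : SD.toReal ≤ 2 ^ (q + 1) * SE.toReal := by
    have := ENNReal.toReal_mono (ENNReal.mul_ne_top h2ne hSEne) hSDle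
    rwa [ENNReal.toReal_mul, h2q] at this
  have hineq2 : SE.toReal ≤ 2 ^ (q + 1) * SD.toReal := by
    have := ENNReal.toReal_mono (ENNReal.mul_ne_top h2ne hSDne) hSEle
    rwa [ENNReal.toReal_mul, h2q] at this
  have hCpos : (0:ℝ) < 2 ^ (q + 1) := by positivity
  constructor
  · rw [hlD, hlE, inv_mul_le_iff₀ hCpos]
    exact hineq2
  · rw [hlD, hlE]
    exact hineq1
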